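/- Let l and q be vectors in ℝ³ with ‖l‖ = 1, and let n_l > 0 be a real number such that (1/n_l²)·‖l × q‖² ≤ 1 (where × is the cross product). Then the refracted-ray direction vector η_ref = (1/n_l)·(l × (l × q)) − l·√(1 − (1/n_l²)·⟨l × q, l × q⟩) is a unit vector: ‖η_ref‖ = 1. -/

import Mathlib

open RealInnerProductSpace

/-- Cross product of two vectors in three-dimensional Euclidean space. -/
noncomputable def cross3 (u v : EuclideanSpace ℝ (Fin 3)) :
    EuclideanSpace ℝ (Fin 3) :=
  (EuclideanSpace.equiv (Fin 3) ℝ).symm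
    ![u 1 * v 2 - u 2 * v 1, u 2 * v 0 - u 0 * v 2, u 0 * v 1 - u 1 * v 0]

lemma inner3 (x y : EuclideanSpace ℝ (Fin 3)) :
    ⟪x, y⟫ = x 0 * y 0 + x 1 * y 1 + x 2 * y 2 := by
  simp [PiLp.inner_apply, Fin.sum_univ_three, RCLike.inner_apply]; ring

lemma cross3_apply (u v : EuclideanSpace ℝ (Fin 3)) :
    cross3 u v 0 = u 1 * v 2 - u 2 * v 1 ∧
    cross3 u v 1 = u 2 * v 0 - u 0 * v 2 ∧
    cross3 u v 2 = u 0 * v 1 - u 1 * v 0 := by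
  refine ⟨?_, ?_, ?_⟩ <;> simp [cross3]

set_option maxHeartbeats 1000000 in
/-- The refracted-ray direction vector given by the vector form of Snell's law
is a unit vector. -/
theorem refracted_ray_unit (l q : EuclideanSpace ℝ (Fin 3)) (n_l : ℝ)
    (hl : ‖l‖ = 1) (hn : n_l > 0)
    (hcross : (1 / n_l ^ 2) * ‖cross3 l q‖ ^ 2 ≤ 1) :
    ‖(1 / n_l) • cross3 l (cross3 l q)
        - Real.sqrt (1 - (1 / n_l ^ 2) * ⟪cross3 l q, cross3 l q⟫) • l‖ = 1 := by
  set a := cross3 l q with ha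
  set b := cross3 l a with hb
  have hll : ⟪l, l⟫ = 1 := by
    rw [real_inner_self_eq_norm_sq, hl]; norm_num
  have hbl : ⟪b, l⟫ = 0 := by
    obtain ⟨h0, h1, h2⟩ := cross3_apply l a
    rw [inner3, hb, h0, h1, h2]; ring
  have hla : ⟪l, a⟫ = 0 := by
    obtain ⟨h0, h1, h2⟩ := cross3_apply l q
    rw [inner3, ha, h0, h1, h2]; ring
  have hbb : ⟪b, b⟫ = ⟪a, a⟫ := by
    obtain ⟨h0, h1, h2⟩ := cross3_apply l a
    have hll' := hll
    have hla' := hla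
    rw [inner3] at hll' hla'
    rw [inner3, inner3, hb, h0, h1, h2]
    nlinarith [hll', hla']
  have haa : ⟪a, a⟫ = ‖a‖ ^ 2 := real_inner_self_eq_norm_sq a
  have hnn : 0 ≤ 1 - (1 / n_l ^ 2) * ⟪a, a⟫ := by rw [haa]; linarith
  have hs : Real.sqrt (1 - (1 / n_l ^ 2) * ⟪a, a⟫) ^ 2
      = 1 - (1 / n_l ^ 2) * ⟪a, a⟫ := Real.sq_sqrt hnn
  set s := Real.sqrt (1 - (1 / n_l ^ 2) * ⟪a, a⟫) with hsdef
  have key : ⟪(1 / n_l) • b - s • l, (1 / n_l) • b - s • l⟫ = 1 := by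
    have hlb : ⟪l, b⟫ = 0 := by rw [real_inner_comm]; exact hbl
    rw [inner_sub_sub_self]
    simp only [real_inner_smul_left, real_inner_smul_right]
    rw [hbb, hbl, hlb, hll]
    linear_combination hs
  have hnorm : ‖(1 / n_l) • b - s • l‖ ^ 2 = 1 := by
    rw [← real_inner_self_eq_norm_sq, key]
  nlinarith [norm_nonneg ((1 / n_l) • b - s • l), hnorm]
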